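/- Let f : ℝ → ℝ be continuous, c-periodic (c > 0), and satisfy f(αt) = f(t) for all t, where α > 0 and α ≠ 1. Then f is constant. -/

import Mathlib

/-- a continuous `c`-periodic function (`c > 0`) satisfying
`f(αt) = f(t)` for all `t`, with `α > 0`, `α ≠ 1`, is constant. -/
theorem periodic_scaling_invariant_constant
    (f : ℝ → ℝ) (hf : Continuous f)
    (c : ℝ) (hc : 0 < c) (hper : Function.Periodic f c)
    (α : ℝ) (hα : 0 < α) (hα1 : α ≠ 1)
    (hscale : ∀ t, f (α * t) = f t) :
    ∀ s t, f s = f t := by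
  obtain ⟨β, hβ0, hβ1, hβ⟩ : ∃ β : ℝ, 0 < β ∧ β < 1 ∧ ∀ t, f (β * t) = f t := by
    rcases lt_or_gt_of_ne hα1 with h | h
    · exact ⟨α, hα, h, hscale⟩
    · refine ⟨α⁻¹, inv_pos.2 hα, inv_lt_one_of_one_lt₀ h, fun t => ?_⟩
      have := hscale (α⁻¹ * t)
      rw [← mul_assoc, mul_inv_cancel₀ (ne_of_gt hα), one_mul] at this
      exact this.symm
  have hpow : ∀ n : ℕ, ∀ t, f (β ^ n * t) = f t := by
    intro n
    induction n with
    | zero => simp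
    | succ n ih =>
      intro t
      rw [pow_succ, mul_comm (β ^ n) β, mul_assoc, hβ, ih]
  have hβne : β ≠ 0 := ne_of_gt hβ0
  have hperiod : ∀ n : ℕ, Function.Periodic f (β ^ n * c) := by
    intro n x
    have h1 : x + β ^ n * c = β ^ n * (β⁻¹ ^ n * x + c) := by
      field_simp
      rw [mul_add, ← mul_assoc, mul_comm (β ^ n) x, mul_assoc, ← mul_pow, mul_one_div_cancel hβne, one_pow, mul_one]
    have h2 : β ^ n * (β⁻¹ ^ n * x) = x := by field_simp; rw [← mul_pow, mul_one_div_cancel hβne, one_pow, one_mul]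
    rw [h1, hpow, hper, ← hpow n (β⁻¹ ^ n * x), h2]
  intro s t
  have hp0 : ∀ n : ℕ, 0 < β ^ n * c := fun n => mul_pos (pow_pos hβ0 n) hc
  have hβn : Filter.Tendsto (fun n : ℕ => β ^ n * c) Filter.atTop (nhds 0) := by
    simpa using (tendsto_pow_atTop_nhds_zero_of_lt_one hβ0.le hβ1).mul_const c
  set u : ℕ → ℝ := fun n => s + ⌊(t - s) / (β ^ n * c)⌋ * (β ^ n * c) with hu
  have hfu : ∀ n, f (u n) = f s := fun n => ((hperiod n).int_mul _) s
  have hdist : ∀ n, dist (u n) t ≤ β ^ n * c := by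
    intro n
    rw [Real.dist_eq, hu]
    have hpos := hp0 n
    have h1 : ⌊(t - s) / (β ^ n * c)⌋ * (β ^ n * c) ≤ t - s := by
      rw [← le_div_iff₀ hpos]
      exact Int.floor_le _
    have h2 : t - s < (⌊(t - s) / (β ^ n * c)⌋ + 1) * (β ^ n * c) := by
      rw [← div_lt_iff₀ hpos]
      push_cast
      exact Int.lt_floor_add_one _
    have : |s + ⌊(t - s) / (β ^ n * c)⌋ * (β ^ n * c) - t| ≤ β ^ n * c := by
      rw [abs_le]
      constructor <;> push_cast at h2 ⊢ <;> nlinarith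
    exact this
  have hut : Filter.Tendsto u Filter.atTop (nhds t) := by
    rw [tendsto_iff_dist_tendsto_zero]
    exact squeeze_zero (fun n => dist_nonneg) hdist hβn
  have h1 : Filter.Tendsto (fun n => f (u n)) Filter.atTop (nhds (f t)) :=
    (hf.tendsto t).comp hut
  have h2 : Filter.Tendsto (fun n => f (u n)) Filter.atTop (nhds (f s)) := by
    simpa [hfu] using (tendsto_const_nhds : Filter.Tendsto (fun _ : ℕ => f s) Filter.atTop (nhds (f s)))
  exact tendsto_nhds_unique h2 h1
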